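/- Let G be a finite simple graph on n vertices and k ≥ 1 an integer, and let H(G,k) be the associated graph of the reduction. If G contains a clique K of size k, then the set W = { {a_u, a_v} : u, v ∈ K, u ≠ v } consists of k(k−1)/2 unordered pairs of distinct followers of H(G,k), none of which is an edge of H(G,k), and in the graph H(G,k) ∪ W every one of the k followers a_v (v ∈ K) has degree n+k−1, which equals the degree of every leader. -/

import Mathlib

/-- The degree of a vertex: the number of its neighbors. -/
noncomputable def deg {V : Type*} (G : SimpleGraph V) (v : V) : ℕ :=
  (G.neighborSet v).ncard

/-- The generating relation of the reduction graph `H(G,k)`: vertices are `a_v = Sum.inl v`,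
`d_{v,ℓ} = Sum.inr (Sum.inl (v,ℓ))` and leaders `x_i = Sum.inr (Sum.inr i)`; `a_u ~ a_v`
iff `{u,v}` is a non-edge of `G`, the leaders form a clique, and `a_v ~ d_{v,ℓ}` for
`ℓ ∈ [deg_G(v)+1]`. -/
def hRel {V : Type*} (G : SimpleGraph V) (n k : ℕ) :
    (V ⊕ (V × Fin n) ⊕ Fin (n + k)) → (V ⊕ (V × Fin n) ⊕ Fin (n + k)) → Prop
  | Sum.inl u, Sum.inl v => ¬ G.Adj u v
  | Sum.inl v, Sum.inr (Sum.inl (w, ℓ)) => v = w ∧ (ℓ : ℕ) < deg G v + 1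
  | Sum.inr (Sum.inr _), Sum.inr (Sum.inr _) => True
  | _, _ => False

/-- The reduction graph `H(G,k)`. -/
def Hgraph {V : Type*} (G : SimpleGraph V) (n k : ℕ) :
    SimpleGraph (V ⊕ (V × Fin n) ⊕ Fin (n + k)) :=
  SimpleGraph.fromRel (hRel G n k)

/-- Followers of `H(G,k)`: every vertex except the leaders `x_i`. -/
def isFollowerH {V : Type*} {n k : ℕ} : (V ⊕ (V × Fin n) ⊕ Fin (n + k)) → Prop
  | Sum.inr (Sum.inr _) => False
  | _ => True


open Set in
private lemma stmt6_leader_nbr {V : Type*} [Fintype V] [DecidableEq V] (G : SimpleGraph V)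
    {k n : ℕ} (K : Finset V)
    (W : Set (Sym2 (V ⊕ (V × Fin n) ⊕ Fin (n + k))))
    (hW : W = {e | ∃ u ∈ K, ∃ v ∈ K, u ≠ v ∧ e = s(Sum.inl u, Sum.inl v)})
    (i : Fin (n + k)) :
    (Hgraph G n k ⊔ SimpleGraph.fromEdgeSet W).neighborSet (Sum.inr (Sum.inr i)) =
      (fun j => (Sum.inr (Sum.inr j) : V ⊕ (V × Fin n) ⊕ Fin (n + k))) '' {i}ᶜ := by
  subst hW
  ext y
  rcases y with u | ⟨w, ℓ⟩ | j <;>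
    simp [Hgraph, SimpleGraph.fromRel_adj, hRel, SimpleGraph.mem_neighborSet,
      SimpleGraph.fromEdgeSet_adj, Sym2.eq_iff, Set.mem_image, eq_comm, ne_comm]

private lemma stmt6_a_nbr {V : Type*} [Fintype V] [DecidableEq V] (G : SimpleGraph V)
    {k n : ℕ} (K : Finset V)
    (hclique : ∀ u ∈ K, ∀ v ∈ K, u ≠ v → G.Adj u v)
    (W : Set (Sym2 (V ⊕ (V × Fin n) ⊕ Fin (n + k))))
    (hW : W = {e | ∃ u ∈ K, ∃ v ∈ K, u ≠ v ∧ e = s(Sum.inl u, Sum.inl v)})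
    (v : V) (hv : v ∈ K) :
    (Hgraph G n k ⊔ SimpleGraph.fromEdgeSet W).neighborSet (Sum.inl v) =
      (Sum.inl '' (({v}ᶜ \ G.neighborSet v) ∪ (↑K \ {v})))
      ∪ ((fun ℓ => (Sum.inr (Sum.inl (v, ℓ)) : V ⊕ (V × Fin n) ⊕ Fin (n + k))) ''
          {ℓ : Fin n | (ℓ : ℕ) < deg G v + 1}) := by
  subst hW
  ext y
  rcases y with u | ⟨w, ℓ⟩ | j <;>
    simp only [Hgraph, SimpleGraph.fromRel_adj, hRel, SimpleGraph.mem_neighborSet,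
      SimpleGraph.sup_adj, SimpleGraph.fromEdgeSet_adj, Sym2.eq_iff, Set.mem_image,
      Set.mem_setOf_eq, Set.mem_union, Set.mem_diff, Set.mem_compl_iff,
      Set.mem_singleton_iff, Finset.mem_coe, Sum.inl.injEq, Sum.inr.injEq,
      Prod.mk.injEq, ne_eq, reduceCtorEq, false_and, and_false, or_false,
      false_or, exists_false, not_false_eq_true, true_and, and_true]
  · constructor
    · rintro (⟨hne, h | h⟩ | ⟨⟨a, ha, b, hb, hab, (⟨rfl, rfl⟩ | ⟨rfl, rfl⟩)⟩, hne⟩)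
      · exact ⟨u, Or.inl ⟨fun e => hne e.symm, h⟩, rfl⟩
      · exact ⟨u, Or.inl ⟨fun e => hne e.symm, fun h' => h (G.adj_symm h')⟩, rfl⟩
      · exact ⟨u, Or.inr ⟨hb, fun e => hab e.symm⟩, rfl⟩
      · exact ⟨u, Or.inr ⟨ha, hab⟩, rfl⟩
    · rintro ⟨x, (⟨hne, hnadj⟩ | ⟨hx, hne⟩), rfl⟩
      · exact Or.inl ⟨fun e => hne e.symm, Or.inl hnadj⟩
      · exact Or.inr ⟨⟨v, hv, x, hx, fun e => hne e.symm, Or.inl ⟨rfl, rfl⟩⟩,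
          fun e => hne e.symm⟩
  · constructor
    · rintro ⟨rfl, h⟩; exact ⟨ℓ, h, rfl, rfl⟩
    · rintro ⟨x, h, rfl, rfl⟩; exact ⟨rfl, h⟩

/-- Completeness of the Densest-k-Subgraph reduction: if `K` is a clique of size `k` in `G`,
then `W = {{a_u,a_v} : u,v ∈ K, u ≠ v}` is a set of `k(k−1)/2` non-edges between distinct
followers of `H(G,k)`, and after adding them each `a_v` (`v ∈ K`) has degree `n+k−1`,
which equals the degree of every leader. -/
theorem stmt_6 {V : Type*} [Fintype V] [DecidableEq V] (G : SimpleGraph V)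
    (k : ℕ) (hk : 1 ≤ k) (n : ℕ) (hn : n = Fintype.card V)
    (K : Finset V) (hKcard : K.card = k)
    (hclique : ∀ u ∈ K, ∀ v ∈ K, u ≠ v → G.Adj u v) :
    let W : Set (Sym2 (V ⊕ (V × Fin n) ⊕ Fin (n + k))) :=
      {e | ∃ u ∈ K, ∃ v ∈ K, u ≠ v ∧ e = s(Sum.inl u, Sum.inl v)}
    (∀ e ∈ W, ¬ e.IsDiag) ∧
    (∀ e ∈ W, ∀ z ∈ e, isFollowerH z) ∧
    (∀ e ∈ W, e ∉ (Hgraph G n k).edgeSet) ∧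
    W.ncard = k * (k - 1) / 2 ∧
    (∀ v ∈ K,
      deg (Hgraph G n k ⊔ SimpleGraph.fromEdgeSet W) (Sum.inl v) = n + k - 1) ∧
    (∀ i : Fin (n + k),
      deg (Hgraph G n k ⊔ SimpleGraph.fromEdgeSet W) (Sum.inr (Sum.inr i)) = n + k - 1) := by
  
  intro W
  classical
  have hWdef : W = {e | ∃ u ∈ K, ∃ v ∈ K, u ≠ v ∧ e = s(Sum.inl u, Sum.inl v)} := rfl
  have hKne : K.Nonempty := Finset.card_pos.mp (by omega)
  have hn1 : 1 ≤ n := by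
    obtain ⟨v, hv⟩ := hKne
    rw [hn]
    exact Fintype.card_pos_iff.mpr ⟨v⟩
  refine ⟨?_, ?_, ?_, ?_, ?_, ?_⟩
  · rintro e ⟨u, hu, v, hv, huv, rfl⟩
    simp [huv]
  · rintro e ⟨u, hu, v, hv, huv, rfl⟩ z hz
    rcases Sym2.mem_iff.mp hz with rfl | rfl <;> simp [isFollowerH]
  · rintro e ⟨u, hu, v, hv, huv, rfl⟩ he
    rw [SimpleGraph.mem_edgeSet] at he
    have hadj := hclique u hu v hv huv
    simp [Hgraph, SimpleGraph.fromRel_adj, hRel, hadj, G.adj_symm hadj] at he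
  · have hWfin : W = ↑(((K.image
        (fun v => (Sum.inl v : V ⊕ (V × Fin n) ⊕ Fin (n + k)))).offDiag).image Sym2.mk.uncurry) := by
      ext e
      simp only [Finset.coe_image, Set.mem_image, Finset.mem_coe, Finset.mem_offDiag,
        Finset.mem_image, Set.mem_setOf_eq, hWdef]
      constructor
      · rintro ⟨u, hu, v, hv, huv, rfl⟩
        exact ⟨(Sum.inl u, Sum.inl v), ⟨⟨u, hu, rfl⟩, ⟨v, hv, rfl⟩, by simp [huv]⟩, rfl⟩
      · rintro ⟨⟨a, b⟩, ⟨⟨u, hu, rfl⟩, ⟨v, hv, rfl⟩, hne⟩, rfl⟩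
        exact ⟨u, hu, v, hv, by simpa using hne, rfl⟩
    rw [hWfin, Set.ncard_coe_finset, Sym2.card_image_offDiag,
      Finset.card_image_of_injective _ Sum.inl_injective, hKcard, Nat.choose_two_right]
  · intro v hv
    have hsub : G.neighborSet v ⊆ ({v}ᶜ : Set V) := fun u hu => (G.ne_of_adj hu).symm
    have hcompl : ({v}ᶜ : Set V).ncard = n - 1 := by
      rw [Set.compl_eq_univ_diff, Set.ncard_diff (Set.subset_univ _), Set.ncard_univ,
        Set.ncard_singleton, hn, Nat.card_eq_fintype_card]
    have hd : deg G v ≤ n - 1 := by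
      rw [← hcompl]
      exact Set.ncard_le_ncard hsub (Set.toFinite _)
    have hdn : deg G v + 1 ≤ n := by omega
    have hinj2 : Function.Injective
        (fun ℓ : Fin n => (Sum.inr (Sum.inl (v, ℓ)) : V ⊕ (V × Fin n) ⊕ Fin (n + k))) :=
      fun a b h => by simpa using h
    unfold deg
    rw [stmt6_a_nbr G K hclique W hWdef v hv]
    have hdisj : Disjoint
        (Sum.inl '' (({v}ᶜ \ G.neighborSet v) ∪ (↑K \ {v})) :
          Set (V ⊕ (V × Fin n) ⊕ Fin (n + k)))
        ((fun ℓ => (Sum.inr (Sum.inl (v, ℓ)) : V ⊕ (V × Fin n) ⊕ Fin (n + k))) ''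
          {ℓ : Fin n | (ℓ : ℕ) < deg G v + 1}) := by
      rw [Set.disjoint_left]
      rintro x ⟨a, -, rfl⟩ ⟨b, -, h⟩
      exact absurd h (by simp)
    have hdisjA : Disjoint (({v}ᶜ : Set V) \ G.neighborSet v) (↑K \ {v}) := by
      rw [Set.disjoint_left]
      rintro x ⟨-, hx⟩ ⟨hxK, hxv⟩
      exact hx (hclique v hv x hxK (fun e => hxv (e ▸ rfl)))
    have hB : {ℓ : Fin n | (ℓ : ℕ) < deg G v + 1} = (Fin.castLE hdn) '' Set.univ := by
      ext ℓ
      constructor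
      · intro h
        exact ⟨⟨(ℓ : ℕ), h⟩, trivial, by ext; simp⟩
      · rintro ⟨j, -, rfl⟩
        exact j.2
    rw [Set.ncard_union_eq hdisj (Set.toFinite _) (Set.toFinite _),
      Set.ncard_image_of_injective _ Sum.inl_injective,
      Set.ncard_image_of_injective _ hinj2,
      Set.ncard_union_eq hdisjA (Set.toFinite _) (Set.toFinite _),
      Set.ncard_diff hsub, hcompl, hB,
      Set.ncard_image_of_injective _ (Fin.castLE_injective hdn),
      Set.ncard_univ, Nat.card_eq_fintype_card, Fintype.card_fin]
    have hKv : (↑K \ ({v} : Set V)).ncard = k - 1 := by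
      rw [← Finset.coe_erase, Set.ncard_coe_finset, Finset.card_erase_of_mem hv, hKcard]
    rw [hKv]
    have hr : (G.neighborSet v).ncard = deg G v := rfl
    rw [hr]
    omega
  · intro i
    have hinj : Function.Injective
        (fun j : Fin (n + k) => (Sum.inr (Sum.inr j) : V ⊕ (V × Fin n) ⊕ Fin (n + k))) :=
      fun a b h => by simpa using h
    unfold deg
    rw [stmt6_leader_nbr G K W hWdef i, Set.ncard_image_of_injective _ hinj,
      Set.compl_eq_univ_diff, Set.ncard_diff (Set.subset_univ _), Set.ncard_univ,
      Set.ncard_singleton, Nat.card_eq_fintype_card, Fintype.card_fin]
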